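/- Let a, b, c, d form a 2×2 quantum matrix in an associative unital ℚ(q)-algebra, write 𝐱^{(m)} := ((q − q^{−1})^{−1} x)^m / [m]_q! for x ∈ {a, b, d}, and set A(h,f,r,s) := binom(r+1,2) + binom(s,2) − r(h+f−r). Then for all h, f ∈ ℕ: 𝐝^{(f)} 𝐚^{(h)} = Σ_{r=0}^{min(h,f)} Σ_{s=0}^{r} (−1)^r q^{A(h,f,r,s)} (q−1)^s (s)_q! (r choose s)_q · 𝐚^{(h−r)} 𝐛^{(r)} 𝐝^{(f−r)} (c; f − r choose s), and also 𝐝^{(f)} 𝐚^{(h)} = Σ_{r=0}^{min(h,f)} Σ_{s=0}^{r} (−1)^r q^{A(h,f,r,s)} (q−1)^s (s)_q! (r choose s)_q · 𝐚^{(h−r)} 𝐛^{(r)} (c; 0 choose s) 𝐝^{(f−r)}. (Relation [D.3+] of Theorem 4.6: the case where the bottom-left corner c of the rectangle of generators lies on the main diagonal of the q-matrix of generators of F_q[M_n].) -/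

import Mathlib

noncomputable section

open Finset

/-- The field `ℚ(q)` of rational functions over `ℚ`. -/
abbrev 𝕂 : Type := RatFunc ℚ

/-- The indeterminate `q`. -/
def q : 𝕂 := RatFunc.X

/-- `(n)_q = 1 + q + ⋯ + q^(n-1)`. -/
def qNum (n : ℕ) : 𝕂 := ∑ i ∈ range n, q ^ i

/-- `(n)_q! = ∏_{r=1}^n (r)_q`. -/
def qNumFac (n : ℕ) : 𝕂 := ∏ r ∈ range n, qNum (r + 1)

/-- `(n choose s)_q = (n)_q! / ((s)_q! (n-s)_q!)`. -/
def qNumBinom (n s : ℕ) : 𝕂 := qNumFac n / (qNumFac s * qNumFac (n - s))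

/-- `[n]_q = (q^n - q^(-n))/(q - q⁻¹)`. -/
def qInt (n : ℕ) : 𝕂 := (q ^ n - q⁻¹ ^ n) / (q - q⁻¹)

/-- `[n]_q! = ∏_{r=1}^n [r]_q`. -/
def qIntFac (n : ℕ) : 𝕂 := ∏ r ∈ range n, qInt (r + 1)

/-- `[n choose s]_q = [n]_q! / ([s]_q! [n-s]_q!)`. -/
def qIntBinom (n s : ℕ) : 𝕂 := qIntFac n / (qIntFac s * qIntFac (n - s))

variable {A : Type*} [Ring A] [Algebra 𝕂 A]

/-- The `q`-divided power `X^(n) = X^n / [n]_q!`. -/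
def qDiv (X : A) (n : ℕ) : A := (qIntFac n)⁻¹ • X ^ n

/-- The `q`-binomial coefficient `(X ; c choose n) = ∏_{s=1}^n (q^(c+1-s) X - 1)/(q^s - 1)`. -/
def qBin (X : A) (c : ℤ) (n : ℕ) : A :=
  (∏ s ∈ range n, (q ^ (s + 1) - 1))⁻¹ •
    ((List.range n).map (fun i => (q ^ (c - (i : ℤ)) : 𝕂) • X - 1)).prod

/-- `{X ; c choose n , r} = ∑_{s=0}^r q^(binom(s+1,2)) (r choose s)_q (X ; c+s choose n-r)`. -/
def qBrace (X : A) (c : ℤ) (n r : ℕ) : A :=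
  ∑ s ∈ range (r + 1),
    (q ^ ((s + 1).choose 2) * qNumBinom r s : 𝕂) • qBin X (c + s) (n - r)


lemma q_ne_zero : q ≠ 0 := RatFunc.X_ne_zero

lemma poly_ne {p : Polynomial ℚ} (hp : p ≠ 0) :
    (algebraMap (Polynomial ℚ) 𝕂) p ≠ 0 := by
  intro h
  exact hp (RatFunc.algebraMap_injective ℚ (by simpa using h))

lemma q_pow_sub_one_ne (m : ℕ) (hm : 1 ≤ m) : q ^ m - 1 ≠ 0 := by
  have : (q ^ m - 1 : 𝕂) = (algebraMap (Polynomial ℚ) 𝕂) (Polynomial.X ^ m - 1) := by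
    simp [q, ← RatFunc.algebraMap_X, map_sub, map_pow]
  rw [this]
  apply poly_ne
  intro h
  have := congrArg (Polynomial.eval 0) h
  simp [Polynomial.eval_pow, zero_pow (by omega : m ≠ 0)] at this

lemma qsub_ne : q - q⁻¹ ≠ 0 := by
  have h2 : q ^ 2 - 1 ≠ 0 := q_pow_sub_one_ne 2 (by norm_num)
  intro h
  apply h2
  have := sub_eq_zero.mp h
  have : q * q = 1 := by
    nth_rewrite 2 [this]
    rw [mul_inv_cancel₀ q_ne_zero]
  rw [sq, this]
  ring

lemma q_sub_one_ne : q - 1 ≠ 0 := by simpa using q_pow_sub_one_ne 1 le_rfl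

lemma qNum_ne (n : ℕ) : qNum (n + 1) ≠ 0 := by
  have : qNum (n+1) * (q - 1) = q ^ (n+1) - 1 := by
    rw [qNum, geom_sum_mul]
  intro h
  apply q_pow_sub_one_ne (n+1) (by omega)
  rw [← this, h, zero_mul]

lemma qInt_zpow (n : ℕ) : qInt n = (q ^ (n : ℤ) - q ^ (-(n : ℤ))) / (q - q⁻¹) := by
  rw [qInt, zpow_natCast, zpow_neg, zpow_natCast, inv_pow]

lemma qInt_ne (n : ℕ) : qInt (n + 1) ≠ 0 := by
  rw [qInt]
  apply div_ne_zero _ qsub_ne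
  intro hz
  have hz' : q ^ (n+1) = q⁻¹ ^ (n+1) := sub_eq_zero.mp hz
  apply q_pow_sub_one_ne (2*(n+1)) (by omega)
  rw [sub_eq_zero, two_mul, pow_add]
  nth_rewrite 2 [hz']
  rw [← mul_pow, mul_inv_cancel₀ q_ne_zero, one_pow]

lemma qIntFac_ne (n : ℕ) : qIntFac n ≠ 0 :=
  Finset.prod_ne_zero_iff.mpr fun i _ => qInt_ne i

lemma qNumFac_ne (n : ℕ) : qNumFac n ≠ 0 :=
  Finset.prod_ne_zero_iff.mpr fun i _ => qNum_ne i

-- M2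
lemma qNum_split {s r : ℕ} (h : s ≤ r) :
    qNum r = q ^ (s : ℤ) * qNum (r - s) + qNum s := by
  obtain ⟨t, rfl⟩ := Nat.exists_eq_add_of_le h
  rw [qNum, Finset.sum_range_add]
  simp only [qNum, Nat.add_sub_cancel_left]
  rw [Finset.mul_sum]
  rw [add_comm]
  congr 1
  apply Finset.sum_congr rfl
  intro i _
  rw [pow_add, zpow_natCast]

-- M1
lemma qInt_split {r m : ℕ} (h : r ≤ m) :
    qInt m = q ^ (r : ℤ) * qInt (m - r) + q ^ ((r : ℤ) - (m : ℤ)) * qInt r := by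
  have hq := q_ne_zero
  rw [qInt_zpow, qInt_zpow, qInt_zpow]
  have hc : ((m - r : ℕ) : ℤ) = (m : ℤ) - (r : ℤ) := by
    push_cast [Nat.cast_sub h]; ring
  rw [hc]
  rw [← mul_div_assoc, ← mul_div_assoc, ← add_div]
  congr 1
  rw [mul_sub, mul_sub, ← zpow_add₀ hq, ← zpow_add₀ hq, ← zpow_add₀ hq, ← zpow_add₀ hq]
  ring_nf


/-- exponent A(h,f,r,s) -/
def Ee (h f r s : ℕ) : ℤ :=
  (((r+1).choose 2 : ℕ) : ℤ) + ((s.choose 2 : ℕ) : ℤ) - (r:ℤ) * ((h:ℤ) + (f:ℤ) - (r:ℤ))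

def Ph (n k : ℕ) : 𝕂 := ∏ i ∈ range k, qInt (n - i)
def Pn (n k : ℕ) : 𝕂 := ∏ i ∈ range k, qNum (n - i)

def Kc (h f r s : ℕ) : 𝕂 :=
  (-1)^r * q ^ (Ee h f r s) * (q - q⁻¹)^r * Ph h r * Ph f r * Pn r s *
    (qIntFac r)⁻¹ * (qNumFac s)⁻¹

def Wc (h f r' s' : ℕ) : 𝕂 :=
  -((q ^ (2*(f:ℤ) - 1) - q⁻¹) * (q⁻¹)^(2*h) *
    q ^ ((s':ℤ) - 2*((f:ℤ) - 1 - (r':ℤ))) * Kc h (f-1) r' s')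

lemma qInt_zero : qInt 0 = 0 := by simp [qInt]
lemma qNum_zero : qNum 0 = 0 := by simp [qNum]

lemma Ph_succ_right (n k : ℕ) : Ph n (k+1) = Ph n k * qInt (n - k) :=
  Finset.prod_range_succ _ _

lemma Ph_succ_left (n k : ℕ) : Ph (n+1) (k+1) = qInt (n+1) * Ph n k := by
  rw [Ph, Finset.prod_range_succ']
  simp only [Nat.succ_sub_succ]
  rw [Nat.sub_zero, mul_comm, Ph]

lemma Pn_succ_right (n k : ℕ) : Pn n (k+1) = Pn n k * qNum (n - k) :=
  Finset.prod_range_succ _ _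

lemma Pn_succ_left (n k : ℕ) : Pn (n+1) (k+1) = qNum (n+1) * Pn n k := by
  rw [Pn, Finset.prod_range_succ']
  simp only [Nat.succ_sub_succ]
  rw [Nat.sub_zero, mul_comm, Pn]

lemma Ph_eq_zero {n k : ℕ} (h : n < k) : Ph n k = 0 := by
  apply Finset.prod_eq_zero (i := n) (Finset.mem_range.mpr h)
  simp [qInt_zero]

lemma qIntFac_succ (k : ℕ) : qIntFac (k+1) = qIntFac k * qInt (k+1) :=
  Finset.prod_range_succ _ _

lemma qNumFac_succ (k : ℕ) : qNumFac (k+1) = qNumFac k * qNum (k+1) :=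
  Finset.prod_range_succ _ _

lemma qfac (f : ℕ) : q^(2*(f:ℤ)-1) - q⁻¹ = q^((f:ℤ)-1) * (q-q⁻¹) * qInt f := by
  rw [qInt_zpow, mul_assoc, mul_comm (q - q⁻¹), div_mul_cancel₀ _ qsub_ne, mul_sub,
    ← zpow_add₀ q_ne_zero, ← zpow_add₀ q_ne_zero]
  congr 2
  · ring
  · rw [show (f:ℤ) - 1 + -(f:ℤ) = -1 by ring, zpow_neg_one]

lemma Wc_eq (h F r' s' : ℕ) : Wc h (F+1) r' s' =
    -((q-q⁻¹) * qInt (F+1) * q ^ ((s':ℤ) - 2*(h:ℤ) - (F:ℤ) + 2*(r':ℤ)) * Kc h F r' s') := by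
  rw [Wc, Nat.add_sub_cancel, qfac]
  rw [show ((q⁻¹ : 𝕂))^(2*h) = q ^ (-(2*(h:ℤ))) by
    rw [zpow_neg, inv_pow, ← zpow_natCast]; norm_num]
  rw [show (((F+1:ℕ):ℤ)) = (F:ℤ)+1 by push_cast; ring]
  rw [show ((s':ℤ) - 2*(((F:ℤ)+1) - 1 - (r':ℤ))) = (s':ℤ) - 2*(F:ℤ) + 2*(r':ℤ) by ring]
  rw [show (q ^ ((F:ℤ)+1-1) * (q-q⁻¹) * qInt (F+1)) * q^(-(2*(h:ℤ))) *
      q ^ ((s':ℤ) - 2*(F:ℤ) + 2*(r':ℤ)) * Kc h F r' s'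
    = (q-q⁻¹) * qInt (F+1) *
      (q ^ ((F:ℤ)+1-1) * q^(-(2*(h:ℤ))) * q ^ ((s':ℤ) - 2*(F:ℤ) + 2*(r':ℤ))) * Kc h F r' s'
    by ring]
  rw [← zpow_add₀ q_ne_zero, ← zpow_add₀ q_ne_zero,
    show ((F:ℤ)+1-1 + -(2*(h:ℤ)) + ((s':ℤ) - 2*(F:ℤ) + 2*(r':ℤ)))
      = ((s':ℤ) - 2*(h:ℤ) - (F:ℤ) + 2*(r':ℤ)) by ring]

lemma Pn_zero (n : ℕ) : Pn n 0 = 1 := by simp [Pn]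
lemma Ph_zero' (n : ℕ) : Ph n 0 = 1 := by simp [Ph]
lemma qNumFac_zero : qNumFac 0 = 1 := by simp [qNumFac]

lemma choose2_succ (n : ℕ) : (n+1).choose 2 = n.choose 2 + n := by
  rw [Nat.choose_succ_succ n 1, Nat.choose_one_right, Nat.add_comm]

lemma hIF (R : ℕ) : (qIntFac R)⁻¹ = qInt (R+1) * (qIntFac (R+1))⁻¹ := by
  rw [qIntFac_succ, mul_inv, ← mul_assoc, mul_comm (qInt (R+1)) ((qIntFac R)⁻¹), mul_assoc, mul_inv_cancel₀ (qInt_ne R), mul_one]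

lemma hNF (S : ℕ) : (qNumFac S)⁻¹ = qNum (S+1) * (qNumFac (S+1))⁻¹ := by
  rw [qNumFac_succ, mul_inv, ← mul_assoc, mul_comm (qNum (S+1)) ((qNumFac S)⁻¹), mul_assoc, mul_inv_cancel₀ (qNum_ne S), mul_one]

lemma key (h f r s : ℕ) (hf : 1 ≤ f) (hrf : r ≤ f) (hsr : s ≤ r) :
    Kc (h+1) f r s = Kc h f r s
      + (if r = 0 ∨ s = r then 0 else Wc h f (r-1) s)
      + (if r = 0 ∨ s = 0 then 0 else Wc h f (r-1) (s-1)) := by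
  obtain ⟨F, rfl⟩ : ∃ F, f = F+1 := ⟨f-1, by omega⟩
  rcases Nat.eq_zero_or_pos r with rfl | hr
  · interval_cases s
    simp [Kc, Ee, Ph_zero', Pn_zero, qNumFac_zero]
  obtain ⟨R, rfl⟩ : ∃ R, r = R+1 := ⟨r-1, by omega⟩
  simp only [Nat.add_sub_cancel]
  have hM1cast : ((R:ℤ)+1) - ((h:ℤ)+1) = (R:ℤ) - (h:ℤ) := by ring
  by_cases hRh : R ≤ h
  · -- main case
    have M1 : qInt (h+1) = q^((R:ℤ)+1) * qInt (h - R) + q^((R:ℤ)-(h:ℤ)) * qInt (R+1) := by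
      have := qInt_split (r := R+1) (m := h+1) (by omega)
      rw [Nat.succ_sub_succ] at this
      push_cast at this
      rw [hM1cast] at this
      exact_mod_cast this
    rcases Nat.eq_zero_or_pos s with rfl | hs
    · -- s = 0
      have hK1 : Kc (h+1) (F+1) (R+1) 0 = qInt (h+1) * qInt (F+1) *
          ((-1)^(R+1) * q ^ (Ee (h+1) (F+1) (R+1) 0) * (q-q⁻¹)^(R+1) * Ph h R * Ph F R *
            (qIntFac (R+1))⁻¹) := by
        rw [Kc, Ph_succ_left h R, Ph_succ_left F R, Pn_zero, qNumFac_zero]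
        simp only [inv_one]
        ring
      have hK2 : Kc h (F+1) (R+1) 0 = q^((R:ℤ)+1) * qInt (h - R) * qInt (F+1) *
          ((-1)^(R+1) * q ^ (Ee (h+1) (F+1) (R+1) 0) * (q-q⁻¹)^(R+1) * Ph h R * Ph F R *
            (qIntFac (R+1))⁻¹) := by
        rw [Kc, Ph_succ_right h R, Ph_succ_left F R, Pn_zero, qNumFac_zero,
          show Ee h (F+1) (R+1) 0 = Ee (h+1) (F+1) (R+1) 0 + ((R:ℤ)+1) by
            simp only [Ee]; push_cast; ring,
          zpow_add₀ q_ne_zero (Ee (h+1) (F+1) (R+1) 0) ((R:ℤ)+1)]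
        simp only [inv_one]
        ring
      have hT2 : (if (R+1) = 0 ∨ (0:ℕ) = R+1 then 0 else Wc h (F+1) R 0)
          = q^((R:ℤ)-(h:ℤ)) * qInt (R+1) * qInt (F+1) *
          ((-1)^(R+1) * q ^ (Ee (h+1) (F+1) (R+1) 0) * (q-q⁻¹)^(R+1) * Ph h R * Ph F R *
            (qIntFac (R+1))⁻¹) := by
        rw [if_neg (by omega), Wc_eq, Kc, Pn_zero, qNumFac_zero, hIF R,
          show Ee h F R 0 = Ee (h+1) (F+1) (R+1) 0 + ((h:ℤ)+(F:ℤ)-(R:ℤ)) by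
            simp only [Ee, choose2_succ]; push_cast; ring,
          zpow_add₀ q_ne_zero (Ee (h+1) (F+1) (R+1) 0) ((h:ℤ)+(F:ℤ)-(R:ℤ))]
        have hmerge : q ^ ((0:ℤ) - 2*(h:ℤ) - (F:ℤ) + 2*(R:ℤ)) * q ^ ((h:ℤ)+(F:ℤ)-(R:ℤ))
            = q^((R:ℤ)-(h:ℤ)) := by
          rw [← zpow_add₀ q_ne_zero]; congr 1; ring
        push_cast
        push_cast at hmerge
        simp only [inv_one]
        linear_combination ((q-q⁻¹) * qInt (F+1) * ((-1)^(R+1) *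
          q ^ (Ee (h+1) (F+1) (R+1) 0) * (q-q⁻¹)^R * Ph h R * Ph F R *
          qInt (R+1) * (qIntFac (R+1))⁻¹)) * hmerge
      rw [hK1, hK2, hT2, if_pos (Or.inr rfl)]
      linear_combination (qInt (F+1) * ((-1)^(R+1) * q ^ (Ee (h+1) (F+1) (R+1) 0) *
        (q-q⁻¹)^(R+1) * Ph h R * Ph F R * (qIntFac (R+1))⁻¹)) * M1
    · -- s = S+1
      obtain ⟨S, rfl⟩ : ∃ S, s = S+1 := ⟨s-1, by omega⟩
      simp only [Nat.add_sub_cancel]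
      have hSR : S ≤ R := by omega
      have M2 : qNum (R+1) = q^((S:ℤ)+1) * qNum (R - S) + qNum (S+1) := by
        have := qNum_split (s := S+1) (r := R+1) (by omega)
        rw [Nat.succ_sub_succ] at this
        push_cast at this
        exact_mod_cast this
      have hK1 : Kc (h+1) (F+1) (R+1) (S+1) = qInt (h+1) * qInt (F+1) * qNum (R+1) *
          ((-1)^(R+1) * q ^ (Ee (h+1) (F+1) (R+1) (S+1)) * (q-q⁻¹)^(R+1) * Ph h R * Ph F R *
            Pn R S * (qIntFac (R+1))⁻¹ * (qNumFac (S+1))⁻¹) := by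
        rw [Kc, Ph_succ_left h R, Ph_succ_left F R, Pn_succ_left R S]
        ring
      have hK2 : Kc h (F+1) (R+1) (S+1) = q^((R:ℤ)+1) * qInt (h - R) * qInt (F+1) * qNum (R+1) *
          ((-1)^(R+1) * q ^ (Ee (h+1) (F+1) (R+1) (S+1)) * (q-q⁻¹)^(R+1) * Ph h R * Ph F R *
            Pn R S * (qIntFac (R+1))⁻¹ * (qNumFac (S+1))⁻¹) := by
        rw [Kc, Ph_succ_right h R, Ph_succ_left F R, Pn_succ_left R S,
          show Ee h (F+1) (R+1) (S+1) = Ee (h+1) (F+1) (R+1) (S+1) + ((R:ℤ)+1) by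
            simp only [Ee]; push_cast; ring,
          zpow_add₀ q_ne_zero (Ee (h+1) (F+1) (R+1) (S+1)) ((R:ℤ)+1)]
        ring
      have hT2 : (if (R+1) = 0 ∨ (S+1) = R+1 then 0 else Wc h (F+1) R (S+1))
          = q^((R:ℤ)-(h:ℤ)) * q^((S:ℤ)+1) * qNum (R - S) * qInt (R+1) * qInt (F+1) *
          ((-1)^(R+1) * q ^ (Ee (h+1) (F+1) (R+1) (S+1)) * (q-q⁻¹)^(R+1) * Ph h R * Ph F R *
            Pn R S * (qIntFac (R+1))⁻¹ * (qNumFac (S+1))⁻¹) := by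
        by_cases hscase : S = R
        · subst hscase
          rw [if_pos (Or.inr rfl)]
          simp [qNum_zero]
        · rw [if_neg (by omega), Wc_eq, Kc, Pn_succ_right R S, hIF R,
            show Ee h F R (S+1) = Ee (h+1) (F+1) (R+1) (S+1) + ((h:ℤ)+(F:ℤ)-(R:ℤ)) by
              simp only [Ee, choose2_succ]; push_cast; ring,
            zpow_add₀ q_ne_zero (Ee (h+1) (F+1) (R+1) (S+1)) ((h:ℤ)+(F:ℤ)-(R:ℤ))]
          have hmerge : q ^ (((S:ℤ)+1) - 2*(h:ℤ) - (F:ℤ) + 2*(R:ℤ)) * q ^ ((h:ℤ)+(F:ℤ)-(R:ℤ))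
              = q^((R:ℤ)-(h:ℤ)) * q^((S:ℤ)+1) := by
            rw [← zpow_add₀ q_ne_zero, ← zpow_add₀ q_ne_zero]; congr 1; ring
          push_cast
          push_cast at hmerge
          linear_combination ((q-q⁻¹) * qInt (F+1) * ((-1)^(R+1) *
            q ^ (Ee (h+1) (F+1) (R+1) (S+1)) * (q-q⁻¹)^R * Ph h R * Ph F R * Pn R S *
            qNum (R - S) * qInt (R+1) * (qIntFac (R+1))⁻¹ * (qNumFac (S+1))⁻¹)) * hmerge
      have hT3 : (if (R+1) = 0 ∨ (S+1) = 0 then 0 else Wc h (F+1) R S)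
          = q^((R:ℤ)-(h:ℤ)) * qNum (S+1) * qInt (R+1) * qInt (F+1) *
          ((-1)^(R+1) * q ^ (Ee (h+1) (F+1) (R+1) (S+1)) * (q-q⁻¹)^(R+1) * Ph h R * Ph F R *
            Pn R S * (qIntFac (R+1))⁻¹ * (qNumFac (S+1))⁻¹) := by
        rw [if_neg (by omega), Wc_eq, Kc, hIF R, hNF S,
          show Ee h F R S = Ee (h+1) (F+1) (R+1) (S+1) + (((h:ℤ)+(F:ℤ)-(R:ℤ)) - (S:ℤ)) by
            simp only [Ee, choose2_succ]; push_cast; ring,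
          zpow_add₀ q_ne_zero (Ee (h+1) (F+1) (R+1) (S+1)) (((h:ℤ)+(F:ℤ)-(R:ℤ)) - (S:ℤ))]
        have hmerge : q ^ ((S:ℤ) - 2*(h:ℤ) - (F:ℤ) + 2*(R:ℤ)) * q ^ (((h:ℤ)+(F:ℤ)-(R:ℤ)) - (S:ℤ))
            = q^((R:ℤ)-(h:ℤ)) := by
          rw [← zpow_add₀ q_ne_zero]; congr 1; ring
        push_cast
        push_cast at hmerge
        linear_combination ((q-q⁻¹) * qInt (F+1) * ((-1)^(R+1) *
          q ^ (Ee (h+1) (F+1) (R+1) (S+1)) * (q-q⁻¹)^R * Ph h R * Ph F R * Pn R S *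
          qNum (S+1) * qInt (R+1) * (qIntFac (R+1))⁻¹ * (qNumFac (S+1))⁻¹)) * hmerge
      rw [hK1, hK2, hT2, hT3]
      linear_combination (qInt (F+1) * qNum (R+1) * ((-1)^(R+1) *
          q ^ (Ee (h+1) (F+1) (R+1) (S+1)) * (q-q⁻¹)^(R+1) * Ph h R * Ph F R *
          Pn R S * (qIntFac (R+1))⁻¹ * (qNumFac (S+1))⁻¹)) * M1
        + (q^((R:ℤ)-(h:ℤ)) * qInt (R+1) * qInt (F+1) * ((-1)^(R+1) *
          q ^ (Ee (h+1) (F+1) (R+1) (S+1)) * (q-q⁻¹)^(R+1) * Ph h R * Ph F R *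
          Pn R S * (qIntFac (R+1))⁻¹ * (qNumFac (S+1))⁻¹)) * M2
  · -- degenerate: R > h, everything vanishes
    have z1 : Ph (h+1) (R+1) = 0 := Ph_eq_zero (by omega)
    have z2 : Ph h (R+1) = 0 := Ph_eq_zero (by omega)
    have z3 : Ph h R = 0 := Ph_eq_zero (by omega)
    simp [Kc, Wc, z1, z2, z3]


lemma qIntFac_zero : qIntFac 0 = 1 := by simp [qIntFac]

lemma Kc_zero (f s : ℕ) {h r : ℕ} (hr : h < r) : Kc h f r s = 0 := by
  simp [Kc, Ph_eq_zero hr]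

lemma Kc00 (h f : ℕ) : Kc h f 0 0 = 1 := by
  simp [Kc, Ee, Ph_zero', Pn_zero, qNumFac_zero, qIntFac_zero]

lemma Wc_raw (h F r' s' : ℕ) (hr' : r' ≤ F) :
    -(((q:𝕂)^(2*(F:ℤ)+1) - q⁻¹) * ((q⁻¹:𝕂)^h * (q⁻¹:𝕂)^h)) * Kc h F r' s'
      * ((q:𝕂)^((s':ℤ)-((F:ℤ)-(r':ℤ))) * (q⁻¹:𝕂)^(F-r')) = Wc h (F+1) r' s' := by
  rw [Wc, Nat.add_sub_cancel]
  have c1 : (2*((↑(F+1)):ℤ) - 1) = 2*(F:ℤ)+1 := by push_cast; ring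
  have c2 : ((q⁻¹:𝕂)^h * (q⁻¹:𝕂)^h) = (q⁻¹:𝕂)^(2*h) := by
    rw [← pow_add]; congr 1; omega
  have c3 : ((q:𝕂)^((s':ℤ)-((F:ℤ)-(r':ℤ))) * (q⁻¹:𝕂)^(F-r'))
      = q^((s':ℤ) - 2*((↑(F+1):ℤ) - 1 - (r':ℤ))) := by
    rw [inv_pow, ← zpow_natCast q (F-r'), ← zpow_neg, ← zpow_add₀ q_ne_zero]
    congr 1
    push_cast [Nat.cast_sub hr']
    ring
  rw [c1, c2, c3]
  ring

lemma Ph_ne {k n : ℕ} (h : k ≤ n) : Ph n k ≠ 0 := by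
  apply Finset.prod_ne_zero_iff.mpr
  intro i hi
  have : n - i = (n - i - 1) + 1 := by
    have := Finset.mem_range.mp hi
    omega
  rw [this]
  exact qInt_ne _

lemma Pn_ne {k n : ℕ} (h : k ≤ n) : Pn n k ≠ 0 := by
  apply Finset.prod_ne_zero_iff.mpr
  intro i hi
  have : n - i = (n - i - 1) + 1 := by
    have := Finset.mem_range.mp hi
    omega
  rw [this]
  exact qNum_ne _

lemma Ph_fac {r n : ℕ} (h : r ≤ n) : Ph n r * qIntFac (n - r) = qIntFac n := by
  induction r with
  | zero => simp [Ph_zero']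
  | succ k ih =>
    have hk : k ≤ n := by omega
    obtain ⟨m, hm⟩ : ∃ m, n - k = m+1 := ⟨n-k-1, by omega⟩
    have h1 : n - (k+1) = m := by omega
    rw [Ph_succ_right, h1, hm, mul_assoc, mul_comm (qInt (m+1)), ← qIntFac_succ, ← hm, ih hk]

lemma Pn_fac {s r : ℕ} (h : s ≤ r) : Pn r s * qNumFac (r - s) = qNumFac r := by
  induction s with
  | zero => simp [Pn_zero]
  | succ k ih =>
    have hk : k ≤ r := by omega
    obtain ⟨m, hm⟩ : ∃ m, r - k = m+1 := ⟨r-k-1, by omega⟩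
    have h1 : r - (k+1) = m := by omega
    rw [Pn_succ_right, h1, hm, mul_assoc, mul_comm (qNum (m+1)), ← qNumFac_succ, ← hm, ih hk]

lemma Nq_fac (s : ℕ) : (∏ i ∈ range s, ((q:𝕂)^(i+1) - 1)) = (q-1)^s * qNumFac s := by
  induction s with
  | zero => simp [qNumFac_zero]
  | succ k ih =>
    rw [Finset.prod_range_succ, ih, qNumFac_succ,
      show (q:𝕂)^(k+1) - 1 = qNum (k+1) * (q - 1) from (geom_sum_mul q (k+1)).symm]
    ring

lemma coeff_match (h f r s : ℕ) (hrh : r ≤ h) (hrf : r ≤ f) (hsr : s ≤ r) :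
    ((qIntFac f)⁻¹ * ((q-q⁻¹:𝕂)⁻¹)^f * ((qIntFac h)⁻¹ * ((q-q⁻¹:𝕂)⁻¹)^h)) * Kc h f r s
    = ((-1)^r * q ^ (Ee h f r s) * (q-1)^s * qNumFac s * qNumBinom r s)
      * ( (qIntFac (h-r))⁻¹ * ((q-q⁻¹:𝕂)⁻¹)^(h-r) * ((qIntFac r)⁻¹ * ((q-q⁻¹:𝕂)⁻¹)^r)
        * ((qIntFac (f-r))⁻¹ * ((q-q⁻¹:𝕂)⁻¹)^(f-r))
        * (∏ i ∈ range s, ((q:𝕂)^(i+1) - 1))⁻¹ ) := by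
  rw [Kc, qNumBinom, Nq_fac,
    show qIntFac h = Ph h r * qIntFac (h-r) from (Ph_fac hrh).symm,
    show qIntFac f = Ph f r * qIntFac (f-r) from (Ph_fac hrf).symm,
    show qNumFac r = Pn r s * qNumFac (r-s) from (Pn_fac hsr).symm,
    show ((q-q⁻¹:𝕂)⁻¹)^h = ((q-q⁻¹:𝕂)⁻¹)^(h-r) * ((q-q⁻¹:𝕂)⁻¹)^r by
      rw [← pow_add]; congr 1; omega,
    show ((q-q⁻¹:𝕂)⁻¹)^f = ((q-q⁻¹:𝕂)⁻¹)^(f-r) * ((q-q⁻¹:𝕂)⁻¹)^r by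
      rw [← pow_add]; congr 1; omega]
  have hq1 : (q - 1 : 𝕂) ≠ 0 := q_sub_one_ne
  have hX : (q - q⁻¹ : 𝕂) ≠ 0 := qsub_ne
  simp only [inv_pow]
  field_simp [Ph_ne hrh, Ph_ne hrf, Pn_ne hsr, qIntFac_ne, qNumFac_ne,
    pow_ne_zero, hX, hq1]


section Alg
variable {A : Type*} [Ring A] [Algebra 𝕂 A]

/-- unnormalized qBin product -/
def gp (c : A) (μ : ℤ) (s : ℕ) : A :=
  ((List.range s).map (fun i => (q ^ (μ - (i : ℤ)) : 𝕂) • c - 1)).prod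

lemma gp_zero (c : A) (μ : ℤ) : gp c μ 0 = 1 := by simp [gp]

lemma gp_succ (c : A) (μ : ℤ) (s : ℕ) :
    gp c μ (s+1) = gp c μ s * ((q ^ (μ - (s : ℤ)) : 𝕂) • c - 1) := by
  simp [gp, List.range_succ]

lemma comm_gp {x c : A} (μ : ℤ) (s : ℕ) (hxc : x * c = c * x) :
    x * gp c μ s = gp c μ s * x := by
  induction s with
  | zero => simp [gp_zero]
  | succ n ih =>
    rw [gp_succ, ← mul_assoc, ih, mul_assoc, mul_assoc]
    congr 1
    rw [mul_sub, sub_mul, mul_smul_comm, smul_mul_assoc, hxc, mul_one, one_mul]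

lemma c_shift (c : A) (μ : ℤ) (s : ℕ) :
    gp c μ s * c = (q ^ ((s : ℤ) - μ) : 𝕂) • (gp c μ (s+1) + gp c μ s) := by
  have : gp c μ (s+1) + gp c μ s = (q ^ (μ - (s:ℤ)) : 𝕂) • (gp c μ s * c) := by
    rw [gp_succ, mul_sub, mul_one, sub_add_cancel, mul_smul_comm]
  rw [this, smul_smul, ← zpow_add₀ q_ne_zero]
  rw [show (s:ℤ) - μ + (μ - (s:ℤ)) = 0 by ring, zpow_zero, one_smul]

variable {a b c d : A}

lemma hba (hab : a * b = q • (b * a)) : b * a = (q⁻¹ : 𝕂) • (a * b) := by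
  rw [hab, smul_smul, inv_mul_cancel₀ q_ne_zero, one_smul]

lemma swap_pow {x y : A} (hxy : y * x = (q⁻¹ : 𝕂) • (x * y)) (n : ℕ) :
    y * x^n = ((q⁻¹ : 𝕂)^n) • (x^n * y) := by
  induction n with
  | zero => simp
  | succ n ih =>
    rw [pow_succ', ← mul_assoc, hxy, smul_mul_assoc, mul_assoc, ih, mul_smul_comm,
      smul_smul]
    rw [pow_succ', mul_assoc]

lemma swap_pow' {x y : A} (hxy : y * x = (q : 𝕂) • (x * y)) (n : ℕ) :
    y * x^n = ((q : 𝕂)^n) • (x^n * y) := by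
  induction n with
  | zero => simp
  | succ n ih =>
    rw [pow_succ', ← mul_assoc, hxy, smul_mul_assoc, mul_assoc, ih, mul_smul_comm,
      smul_smul]
    rw [pow_succ', mul_assoc]

lemma swap_pow_right {x y : A} (hxy : x * y = (q⁻¹ : 𝕂) • (y * x)) (n : ℕ) :
    x^n * y = ((q⁻¹ : 𝕂)^n) • (y * x^n) := by
  induction n with
  | zero => simp
  | succ n ih =>
    rw [pow_succ, mul_assoc, hxy, mul_smul_comm, ← mul_assoc, ih, smul_mul_assoc,
      smul_smul, mul_assoc, ← pow_succ]
    rw [pow_succ]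
    ring_nf

lemma hdb (hbd : b * d = q • (d * b)) : d * b = (q⁻¹ : 𝕂) • (b * d) := by
  rw [hbd, smul_smul, inv_mul_cancel₀ q_ne_zero, one_smul]

lemma gp_dpow (hcd : c * d = q • (d * c)) (μ : ℤ) (s n : ℕ) :
    gp c μ s * d^n = d^n * gp c (μ + n) s := by
  induction s with
  | zero => simp [gp_zero]
  | succ m ih =>
    have step : ((q ^ (μ - (m:ℤ)) : 𝕂) • c - 1) * d^n
        = d^n * ((q ^ (μ + n - (m:ℤ)) : 𝕂) • c - 1) := by
      rw [sub_mul, mul_sub, one_mul, mul_one, smul_mul_assoc,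
        swap_pow' (hcd) n, smul_smul, mul_smul_comm,
        ← zpow_natCast q n, ← zpow_add₀ q_ne_zero,
        show μ - (m:ℤ) + (n:ℤ) = μ + n - (m:ℤ) by ring]
    rw [gp_succ, mul_assoc, step, ← mul_assoc, ih, mul_assoc, ← gp_succ]

lemma bc_swap_dpow (hbd : b * d = q • (d * b)) (hcd : c * d = q • (d * c)) (n : ℕ) :
    (b * c) * d^n = ((q:𝕂)^n * (q:𝕂)^n) • (d^n * (b * c)) := by
  rw [mul_assoc, swap_pow' hcd n, mul_smul_comm, ← mul_assoc, swap_pow' hbd n,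
    smul_mul_assoc, smul_smul, mul_assoc]

lemma d_pow_a (hbd : b * d = q • (d * b)) (hcd : c * d = q • (d * c))
    (had : a * d - d * a = ((q - q⁻¹ : 𝕂)) • (b * c)) (m : ℕ) :
    d^(m+1) * a = a * d^(m+1) - ((q:𝕂)^(2*(m:ℤ)+1) - q⁻¹) • (d^m * (b*c)) := by
  have hda : d * a = a * d - ((q - q⁻¹ : 𝕂)) • (b * c) := by
    rw [← had, sub_sub_cancel]
  induction m with
  | zero =>
    simpa [zpow_one] using hda
  | succ m ih =>
    have e1 : d^(m+2) * a = d * (d^(m+1) * a) := by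
      rw [← mul_assoc, ← pow_succ']
    rw [e1, ih, mul_sub, ← mul_assoc, hda, sub_mul, smul_mul_assoc,
      bc_swap_dpow hbd hcd (m+1), smul_smul, mul_smul_comm]
    have e2 : d * (d^m * (b*c)) = d^(m+1) * (b*c) := by
      rw [← mul_assoc, ← pow_succ']
    have e3 : a * d * d^(m+1) = a * d^(m+2) := by
      rw [mul_assoc, ← pow_succ']
    rw [e2, e3]
    have h1 : ((q:𝕂)^(m+1) * (q:𝕂)^(m+1)) = q ^ (2*(m:ℤ)+2) := by
      rw [← zpow_natCast q (m+1), ← zpow_add₀ q_ne_zero]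
      congr 1
      push_cast
      ring
    have e4 : q ^ (2*(m:ℤ)+3) = q * q ^ (2*(m:ℤ)+2) := by
      rw [show 2*(m:ℤ)+3 = 1 + (2*(m:ℤ)+2) by ring, zpow_add₀ q_ne_zero, zpow_one]
    have e5 : q ^ (2*(m:ℤ)+1) = q⁻¹ * q ^ (2*(m:ℤ)+2) := by
      rw [show 2*(m:ℤ)+1 = (-1) + (2*(m:ℤ)+2) by ring, zpow_add₀ q_ne_zero, zpow_neg_one]
    have hco : (q - q⁻¹ : 𝕂) * ((q:𝕂)^(m+1) * (q:𝕂)^(m+1))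
        + ((q:𝕂)^(2*(m:ℤ)+1) - q⁻¹) = (q:𝕂)^(2*((m:ℤ)+1)+1) - q⁻¹ := by
      rw [h1, show 2*((m:ℤ)+1)+1 = 2*(m:ℤ)+3 by ring, e4, e5]
      ring
    rw [show (2*(↑(m+1):ℤ)+1) = 2*((m:ℤ)+1)+1 by push_cast; ring, sub_sub, ← add_smul, hco]

lemma bc_apow (hab : a * b = q • (b * a)) (hac : a * c = q • (c * a)) (n : ℕ) :
    (b * c) * a^n = ((q⁻¹:𝕂)^n * (q⁻¹:𝕂)^n) • (a^n * (b * c)) := by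
  rw [mul_assoc, swap_pow (hba hac) n, mul_smul_comm, ← mul_assoc, swap_pow (hba hab) n,
    smul_mul_assoc, smul_smul, mul_assoc]

lemma Tbc (hbc : b * c = c * b) (hbd : b * d = q • (d * b)) (x : A) (ρ m s : ℕ) (μ : ℤ) :
    x * b^ρ * d^m * gp c μ s * (b*c)
      = ((q^((s:ℤ)-μ) * (q⁻¹:𝕂)^m)) • (x * b^(ρ+1) * d^m * (gp c μ (s+1) + gp c μ s)) := by
  have h1 : gp c μ s * (b * c) = (q^((s:ℤ) - μ) : 𝕂) • (b * (gp c μ (s+1) + gp c μ s)) := by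
    rw [← mul_assoc, ← comm_gp μ s hbc, mul_assoc, c_shift, mul_smul_comm]
  have h2 : d^m * (b * (gp c μ (s+1) + gp c μ s))
      = ((q⁻¹:𝕂)^m) • (b * (d^m * (gp c μ (s+1) + gp c μ s))) := by
    rw [← mul_assoc, swap_pow_right (hdb hbd) m, smul_mul_assoc, mul_assoc]
  calc x * b^ρ * d^m * gp c μ s * (b*c)
      = x * (b^ρ * (d^m * (gp c μ s * (b*c)))) := by simp only [mul_assoc]
    _ = _ := by
        rw [h1]
        simp only [mul_smul_comm, smul_smul]
        rw [h2]
        simp only [mul_smul_comm, smul_smul]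
        rw [pow_succ]
        simp only [mul_assoc]
end Alg

-- scalar layer interface (proved in the scalar file)

section Shifts
variable {M : Type*} [AddCommMonoid M] [Module 𝕂 M]

lemma shiftA (f : ℕ) (W' : ℕ → ℕ → 𝕂) (F : ℕ → ℕ → M) :
    ∑ r ∈ range (f+1), ∑ s ∈ range (r+1),
      (if r = 0 ∨ s = r then 0 else W' (r-1) s) • F r s
    = ∑ r' ∈ range f, ∑ s' ∈ range (r'+1), W' r' s' • F (r'+1) s' := by
  rw [Finset.sum_range_succ']
  have h0 : ∑ s ∈ range (0+1), (if (0:ℕ) = 0 ∨ s = 0 then (0:𝕂) else W' (0-1) s) • F 0 s = 0 := by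
    simp
  rw [h0, add_zero]
  apply Finset.sum_congr rfl
  intro r' _
  rw [Finset.sum_range_succ]
  have h1 : (if r'+1 = 0 ∨ r'+1 = r'+1 then (0:𝕂) else W' (r'+1-1) (r'+1)) • F (r'+1) (r'+1)
      = 0 := by simp
  rw [h1, add_zero]
  apply Finset.sum_congr rfl
  intro s' hs'
  have hlt : s' < r'+1 := Finset.mem_range.mp hs'
  rw [if_neg (by omega), Nat.add_sub_cancel]

lemma shiftB (f : ℕ) (W' : ℕ → ℕ → 𝕂) (F : ℕ → ℕ → M) :
    ∑ r ∈ range (f+1), ∑ s ∈ range (r+1),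
      (if r = 0 ∨ s = 0 then 0 else W' (r-1) (s-1)) • F r s
    = ∑ r' ∈ range f, ∑ s' ∈ range (r'+1), W' r' s' • F (r'+1) (s'+1) := by
  rw [Finset.sum_range_succ']
  have h0 : ∑ s ∈ range (0+1), (if (0:ℕ) = 0 ∨ s = 0 then (0:𝕂) else W' (0-1) (s-1)) • F 0 s
      = 0 := by simp
  rw [h0, add_zero]
  apply Finset.sum_congr rfl
  intro r' _
  rw [Finset.sum_range_succ']
  have h1 : (if r'+1 = 0 ∨ (0:ℕ) = 0 then (0:𝕂) else W' (r'+1-1) (0-1)) • F (r'+1) 0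
      = 0 := by simp
  rw [h1, add_zero]
  apply Finset.sum_congr rfl
  intro s' _
  rw [if_neg (by omega), Nat.add_sub_cancel, Nat.add_sub_cancel]
end Shifts


section Core
variable {A : Type*} [Ring A] [Algebra 𝕂 A]
variable {a b c d : A}

theorem core (hab : a * b = q • (b * a)) (hac : a * c = q • (c * a))
    (hbd : b * d = q • (d * b)) (hcd : c * d = q • (d * c))
    (hbc : b * c = c * b)
    (had : a * d - d * a = ((q - q⁻¹ : 𝕂)) • (b * c))
    (h : ℕ) : ∀ f : ℕ, d^f * a^h =
      ∑ r ∈ range (f+1), ∑ s ∈ range (r+1), Kc h f r s •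
        (a^(h-r) * b^r * d^(f-r) * gp c ((f:ℤ)-(r:ℤ)) s) := by
  induction h with
  | zero =>
    intro f
    rw [Finset.sum_eq_single 0]
    · simp [Kc00, gp_zero]
    · intro r hr hne
      apply Finset.sum_eq_zero
      intro s _
      rw [Kc_zero f s (by omega), zero_smul]
    · intro hmem
      exact absurd (Finset.mem_range.mpr (by omega)) hmem
  | succ h IH =>
    intro f
    rcases Nat.eq_zero_or_pos f with rfl | hf
    · rw [Finset.sum_range_one, Finset.sum_range_one]
      simp [Kc00, gp_zero]
    obtain ⟨F, rfl⟩ : ∃ F, f = F+1 := ⟨f-1, by omega⟩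
    have e0 : d^(F+1) * a^(h+1) = (d^(F+1) * a) * a^h := by
      rw [pow_succ' a h, mul_assoc]
    rw [e0, d_pow_a hbd hcd had F, sub_mul, smul_mul_assoc]
    have e2 : (d^F * (b*c)) * a^h = ((q⁻¹:𝕂)^h * (q⁻¹:𝕂)^h) • ((d^F * a^h) * (b*c)) := by
      rw [mul_assoc, bc_apow hab hac h, mul_smul_comm, ← mul_assoc]
    rw [e2, smul_smul, mul_assoc, IH (F+1), IH F]
    rw [sub_eq_add_neg, ← neg_smul]
    simp only [Finset.mul_sum, Finset.sum_mul, Finset.smul_sum, smul_mul_assoc,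
      mul_smul_comm, smul_smul]
    -- Part 1 transformation
    have trans1 : ∀ r ∈ range (F+1+1), ∀ s ∈ range (r+1),
        Kc h (F+1) r s • (a * (a^(h-r) * b^r * d^(F+1-r) * gp c ((↑(F+1):ℤ)-(r:ℤ)) s))
        = Kc h (F+1) r s • (a^(h+1-r) * b^r * d^(F+1-r) * gp c ((↑(F+1):ℤ)-(r:ℤ)) s) := by
      intro r hr s hs
      by_cases hrh : r ≤ h
      · congr 1
        rw [show a * (a^(h-r) * b^r * d^(F+1-r) * gp c ((↑(F+1):ℤ)-(r:ℤ)) s)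
            = (a * a^(h-r)) * b^r * d^(F+1-r) * gp c ((↑(F+1):ℤ)-(r:ℤ)) s by
          simp only [mul_assoc], ← pow_succ' a (h-r),
          show h-r+1 = h+1-r by omega]
      · rw [Kc_zero (F+1) s (by omega), zero_smul, zero_smul]
    -- Part 2 transformation
    have trans2 : ∀ r' ∈ range (F+1), ∀ s' ∈ range (r'+1),
        (-(((q:𝕂)^(2*(F:ℤ)+1) - q⁻¹) * ((q⁻¹:𝕂)^h * (q⁻¹:𝕂)^h)) * Kc h F r' s') •
          ((a^(h-r') * b^(r') * d^(F-r') * gp c ((F:ℤ)-(r':ℤ)) s') * (b*c))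
        = Wc h (F+1) r' s' •
            (a^(h+1-(r'+1)) * b^(r'+1) * d^(F+1-(r'+1)) * gp c ((↑(F+1):ℤ)-(↑(r'+1):ℤ)) (s'+1))
          + Wc h (F+1) r' s' •
            (a^(h+1-(r'+1)) * b^(r'+1) * d^(F+1-(r'+1)) * gp c ((↑(F+1):ℤ)-(↑(r'+1):ℤ)) s') := by
      intro r' hr' s' hs'
      have hr'F : r' ≤ F := by
        have := Finset.mem_range.mp hr'
        omega
      have hcast : ((↑(F+1):ℤ)-(↑(r'+1):ℤ)) = (F:ℤ)-(r':ℤ) := by push_cast; ring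
      have hnat1 : h+1-(r'+1) = h - r' := by omega
      have hnat2 : F+1-(r'+1) = F - r' := by omega
      rw [hcast, hnat1, hnat2, Tbc hbc hbd (a^(h-r')) r' (F-r') s' ((F:ℤ)-(r':ℤ)),
        smul_smul, mul_add, smul_add, Wc_raw h F r' s' hr'F]
    rw [Finset.sum_congr rfl (fun r hr => Finset.sum_congr rfl (fun s hs => trans1 r hr s hs)),
      Finset.sum_congr rfl (fun r hr => Finset.sum_congr rfl (fun s hs => trans2 r hr s hs))]
    simp only [Finset.sum_add_distrib]
    rw [← shiftB (F+1) (Wc h (F+1))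
        (fun r s => a^(h+1-r) * b^r * d^(F+1-r) * gp c ((↑(F+1):ℤ)-(r:ℤ)) s),
      ← shiftA (F+1) (Wc h (F+1))
        (fun r s => a^(h+1-r) * b^r * d^(F+1-r) * gp c ((↑(F+1):ℤ)-(r:ℤ)) s)]
    rw [← Finset.sum_add_distrib, ← Finset.sum_add_distrib]
    apply Finset.sum_congr rfl
    intro r hr
    rw [← Finset.sum_add_distrib, ← Finset.sum_add_distrib]
    apply Finset.sum_congr rfl
    intro s hs
    rw [← add_smul, ← add_smul]
    congr 1
    rw [key h (F+1) r s (by omega)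
      (by have := Finset.mem_range.mp hr; omega)
      (by have := Finset.mem_range.mp hs; omega)]
    ring
end Core

section Final
variable {A : Type*} [Ring A] [Algebra 𝕂 A]
variable {a b c d : A}

lemma qBin_gp (X : A) (μ : ℤ) (s : ℕ) :
    qBin X μ s = (∏ i ∈ range s, ((q:𝕂)^(i+1) - 1))⁻¹ • gp X μ s := rfl

lemma core_min (hab : a * b = q • (b * a)) (hac : a * c = q • (c * a))
    (hbd : b * d = q • (d * b)) (hcd : c * d = q • (d * c))
    (hbc : b * c = c * b)
    (had : a * d - d * a = ((q - q⁻¹ : 𝕂)) • (b * c))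
    (h f : ℕ) : d^f * a^h =
      ∑ r ∈ range (min h f + 1), ∑ s ∈ range (r+1), Kc h f r s •
        (a^(h-r) * b^r * d^(f-r) * gp c ((f:ℤ)-(r:ℤ)) s) := by
  rw [core hab hac hbd hcd hbc had h f]
  symm
  apply Finset.sum_subset
  · apply Finset.range_subset_range.mpr
    omega
  · intro r hr hnr
    apply Finset.sum_eq_zero
    intro s _
    have h1 := Finset.mem_range.mp hr
    have h2 : ¬ r < min h f + 1 := fun hc => hnr (Finset.mem_range.mpr hc)
    rw [Kc_zero _ _ (by omega), zero_smul]

lemma lhs_eq (h f : ℕ) :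
    qDiv (((q - q⁻¹)⁻¹ : 𝕂) • d) f * qDiv (((q - q⁻¹)⁻¹ : 𝕂) • a) h
      = (((qIntFac f)⁻¹ * ((q-q⁻¹:𝕂)⁻¹)^f) * ((qIntFac h)⁻¹ * ((q-q⁻¹:𝕂)⁻¹)^h))
          • (d^f * a^h) := by
  rw [qDiv, qDiv, smul_pow, smul_pow, smul_smul, smul_smul, smul_mul_assoc,
    mul_smul_comm, smul_smul]

lemma term_eq (f h r s : ℕ) :
    qDiv (((q - q⁻¹)⁻¹:𝕂) • a) (h-r) * qDiv (((q - q⁻¹)⁻¹:𝕂) • b) r *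
      qDiv (((q - q⁻¹)⁻¹:𝕂) • d) (f-r) * qBin c ((f:ℤ)-(r:ℤ)) s
    = (((qIntFac (h-r))⁻¹ * ((q-q⁻¹:𝕂)⁻¹)^(h-r)) * ((qIntFac r)⁻¹ * ((q-q⁻¹:𝕂)⁻¹)^r)
        * ((qIntFac (f-r))⁻¹ * ((q-q⁻¹:𝕂)⁻¹)^(f-r))
        * (∏ i ∈ range s, ((q:𝕂)^(i+1) - 1))⁻¹)
      • (a^(h-r) * b^r * d^(f-r) * gp c ((f:ℤ)-(r:ℤ)) s) := by
  rw [qDiv, qDiv, qDiv, qBin_gp]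
  simp only [smul_pow, smul_mul_assoc, mul_smul_comm, smul_smul]
  congr 1
  ring

end Final

/-- **Relation [D.3+] of Theorem 4.6** for a `2×2` quantum matrix, with
`𝐱^(m) := ((q − q⁻¹)⁻¹ x)^m/[m]_q!` for `x ∈ {a,b,d}` and
`A(h,f,r,s) := binom(r+1,2) + binom(s,2) − r(h+f−r)`. -/
theorem relation_D3_plus {A : Type*} [Ring A] [Algebra 𝕂 A]
    (a b c d : A)
    (hab : a * b = q • (b * a)) (hac : a * c = q • (c * a))
    (hbd : b * d = q • (d * b)) (hcd : c * d = q • (d * c))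
    (hbc : b * c = c * b)
    (had : a * d - d * a = ((q - q⁻¹ : 𝕂)) • (b * c))
    (h f : ℕ) :
    (qDiv (((q - q⁻¹)⁻¹ : 𝕂) • d) f * qDiv (((q - q⁻¹)⁻¹ : 𝕂) • a) h =
      ∑ r ∈ range (min h f + 1), ∑ s ∈ range (r + 1),
        ((-1) ^ r *
            q ^ ((((r + 1).choose 2 : ℕ) : ℤ) + ((s.choose 2 : ℕ) : ℤ) -
              (r : ℤ) * ((h : ℤ) + (f : ℤ) - (r : ℤ))) *
            (q - 1) ^ s * qNumFac s * qNumBinom r s : 𝕂) •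
          (qDiv (((q - q⁻¹)⁻¹ : 𝕂) • a) (h - r) * qDiv (((q - q⁻¹)⁻¹ : 𝕂) • b) r *
            qDiv (((q - q⁻¹)⁻¹ : 𝕂) • d) (f - r) * qBin c ((f : ℤ) - (r : ℤ)) s))
    ∧
    (qDiv (((q - q⁻¹)⁻¹ : 𝕂) • d) f * qDiv (((q - q⁻¹)⁻¹ : 𝕂) • a) h =
      ∑ r ∈ range (min h f + 1), ∑ s ∈ range (r + 1),
        ((-1) ^ r *
            q ^ ((((r + 1).choose 2 : ℕ) : ℤ) + ((s.choose 2 : ℕ) : ℤ) -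
              (r : ℤ) * ((h : ℤ) + (f : ℤ) - (r : ℤ))) *
            (q - 1) ^ s * qNumFac s * qNumBinom r s : 𝕂) •
          (qDiv (((q - q⁻¹)⁻¹ : 𝕂) • a) (h - r) * qDiv (((q - q⁻¹)⁻¹ : 𝕂) • b) r *
            qBin c 0 s * qDiv (((q - q⁻¹)⁻¹ : 𝕂) • d) (f - r))) := by
  have part1 : qDiv (((q - q⁻¹)⁻¹ : 𝕂) • d) f * qDiv (((q - q⁻¹)⁻¹ : 𝕂) • a) h =
      ∑ r ∈ range (min h f + 1), ∑ s ∈ range (r + 1),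
        ((-1) ^ r *
            q ^ ((((r + 1).choose 2 : ℕ) : ℤ) + ((s.choose 2 : ℕ) : ℤ) -
              (r : ℤ) * ((h : ℤ) + (f : ℤ) - (r : ℤ))) *
            (q - 1) ^ s * qNumFac s * qNumBinom r s : 𝕂) •
          (qDiv (((q - q⁻¹)⁻¹ : 𝕂) • a) (h - r) * qDiv (((q - q⁻¹)⁻¹ : 𝕂) • b) r *
            qDiv (((q - q⁻¹)⁻¹ : 𝕂) • d) (f - r) * qBin c ((f : ℤ) - (r : ℤ)) s) := by
    rw [lhs_eq, core_min hab hac hbd hcd hbc had h f, Finset.smul_sum]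
    simp only [Finset.smul_sum, smul_smul]
    apply Finset.sum_congr rfl
    intro r hr
    apply Finset.sum_congr rfl
    intro s hs
    rw [term_eq f h r s, smul_smul]
    congr 1
    have hrm := Finset.mem_range.mp hr
    have hsm := Finset.mem_range.mp hs
    have hcm := coeff_match h f r s (by omega) (by omega) (by omega)
    rw [show ((((r + 1).choose 2 : ℕ) : ℤ) + ((s.choose 2 : ℕ) : ℤ) -
        (r : ℤ) * ((h : ℤ) + (f : ℤ) - (r : ℤ))) = Ee h f r s from rfl]
    linear_combination hcm
  refine ⟨part1, ?_⟩
  rw [part1]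
  apply Finset.sum_congr rfl
  intro r hr
  apply Finset.sum_congr rfl
  intro s hs
  congr 1
  have hrm := Finset.mem_range.mp hr
  have hrf : r ≤ f := by omega
  have hswap : qBin c 0 s * qDiv (((q - q⁻¹)⁻¹:𝕂) • d) (f-r)
      = qDiv (((q - q⁻¹)⁻¹:𝕂) • d) (f-r) * qBin c ((f:ℤ)-(r:ℤ)) s := by
    rw [qDiv, smul_pow, smul_smul, qBin_gp, qBin_gp]
    simp only [smul_mul_assoc, mul_smul_comm, smul_smul]
    rw [gp_dpow hcd 0 s (f-r),
      show ((0:ℤ) + ((f-r:ℕ):ℤ)) = (f:ℤ)-(r:ℤ) by push_cast [Nat.cast_sub hrf]; ring]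
    congr 1
    ring
  rw [mul_assoc (qDiv (((q - q⁻¹)⁻¹:𝕂) • a) (h-r) * qDiv (((q - q⁻¹)⁻¹:𝕂) • b) r),
    mul_assoc (qDiv (((q - q⁻¹)⁻¹:𝕂) • a) (h-r) * qDiv (((q - q⁻¹)⁻¹:𝕂) • b) r), hswap]


end
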